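/- Let K, L > 0 and 0 ≤ v < 1, set R = √2·K/L, and define g(ω) = (Lω/K)·arctanh( K v / (L ω) ) − v for |ω| > K v / L. Then: (i) ∫_{|ω| ≥ R} |g(ω)| dω = (K/(2L)) · ( 2√2·v − (2−v²)·ln( (√2+v)/(√2−v) ) ) ≤ K/L; (ii) ∫_{|ω| ≥ R} |g′(ω)| dω = 2√2·arctanh( v/√2 ) − 2v ≤ 1/2; and (iii) ∫_{|ω| ≥ R} |g″(ω)| dω = (2L/K) · ( √2·v − (2−v²)·arctanh( v/√2 ) ) / (2−v²) ≤ 4L/K. -/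

import Mathlib

open MeasureTheory Real Filter Set Topology

/-- The inverse hyperbolic tangent `arctanh(x) = ½ log((1+x)/(1-x))`. -/
noncomputable def arctanh (x : ℝ) : ℝ := (1 / 2) * Real.log ((1 + x) / (1 - x))

lemma arctanh_zero' : arctanh 0 = 0 := by simp [arctanh]

lemma arctanh_neg' (x : ℝ) : arctanh (-x) = - arctanh x := by
  unfold arctanh
  have h1 : (1 + -x) = 1 - x := by ring
  have h2 : (1 - -x) = 1 + x := by ring
  rw [h1, h2, show ((1:ℝ)-x)/(1+x) = ((1+x)/(1-x))⁻¹ from (inv_div _ _).symm, Real.log_inv]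
  ring

lemma arctanh_hasDerivAt' {x : ℝ} (h : |x| < 1) : HasDerivAt arctanh (1/(1-x^2)) x := by
  rw [abs_lt] at h
  have h1 : (0:ℝ) < 1 + x := by linarith [h.1]
  have h2 : (0:ℝ) < 1 - x := by linarith [h.2]
  have d1 : HasDerivAt (fun y : ℝ => 1 + y) 1 x := (hasDerivAt_id x).const_add 1
  have d2 : HasDerivAt (fun y : ℝ => 1 - y) (-1) x := by
    simpa using (hasDerivAt_id x).const_sub 1
  have dd : HasDerivAt (fun y : ℝ => (1/2) * (Real.log (1+y) - Real.log (1-y)))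
      ((1/2) * (1/(1+x) - (-1)/(1-x))) x :=
    ((d1.log h1.ne').sub (d2.log h2.ne')).const_mul _
  have heq : (fun y : ℝ => (1/2) * (Real.log (1+y) - Real.log (1-y))) =ᶠ[nhds x] arctanh := by
    have ho : IsOpen {y : ℝ | |y| < 1} := isOpen_lt continuous_abs continuous_const
    filter_upwards [ho.mem_nhds (by simp [abs_lt]; exact h)] with y hy
    rw [abs_lt] at hy
    unfold arctanh
    rw [Real.log_div (by linarith [hy.1]) (by linarith [hy.2])]
  have hfin := dd.congr_of_eventuallyEq heq.symm
  have h3 : 1 - x^2 ≠ 0 := by nlinarith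
  refine hfin.congr_deriv ?_
  field_simp
  ring

section monohelper

lemma mem_ball_of_Icc' {x y : ℝ} (h0 : 0 ≤ x) (h1 : x < 1) (hy : y ∈ Set.Icc 0 x) : |y| < 1 := by
  rw [abs_lt]; constructor <;> [linarith [hy.1]; linarith [hy.2]]

lemma arctanh_le_helper' {x : ℝ} (h0 : 0 ≤ x) (f f' : ℝ → ℝ)
    (hd : ∀ y ∈ Set.Icc 0 x, HasDerivAt f (f' y) y)
    (hpos : ∀ y ∈ Set.Icc 0 x, 0 ≤ f' y) : f 0 ≤ f x := by
  have hmono : MonotoneOn f (Set.Icc 0 x) := by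
    apply monotoneOn_of_deriv_nonneg (convex_Icc 0 x)
    · exact fun y hy => (hd y hy).continuousAt.continuousWithinAt
    · intro y hy
      have hy' := interior_subset hy
      exact (hd y hy').differentiableAt.differentiableWithinAt
    · intro y hy
      have hy' := interior_subset hy
      rw [(hd y hy').deriv]; exact hpos y hy'
  exact hmono (Set.left_mem_Icc.2 h0) (Set.right_mem_Icc.2 h0) h0

lemma le_arctanh' {x : ℝ} (h0 : 0 ≤ x) (h1 : x < 1) : x ≤ arctanh x := by
  have := arctanh_le_helper' h0 (fun y => arctanh y - y) (fun y => 1/(1-y^2) - 1)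
    (fun y hy => (arctanh_hasDerivAt' (mem_ball_of_Icc' h0 h1 hy)).sub (hasDerivAt_id y))
    (fun y hy => by
      have hab := mem_ball_of_Icc' h0 h1 hy
      have hsq : y^2 < 1 := by nlinarith [abs_lt.1 hab]
      have h2 : 0 < 1 - y^2 := by linarith
      rw [sub_nonneg, le_div_iff₀ h2]; nlinarith [sq_nonneg y])
  simp only [arctanh_zero'] at this; linarith

lemma arctanh_le' {x : ℝ} (h0 : 0 ≤ x) (h1 : x < 1) : arctanh x ≤ x/(1-x^2) := by
  have := arctanh_le_helper' h0 (fun y => y/(1-y^2) - arctanh y)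
    (fun y => (1+y^2)/(1-y^2)^2 - 1/(1-y^2))
    (fun y hy => by
      have hab := mem_ball_of_Icc' h0 h1 hy
      have hsq : y^2 < 1 := by nlinarith [abs_lt.1 hab]
      have h2 : (1 : ℝ) - y^2 ≠ 0 := by linarith
      have d1 : HasDerivAt (fun y : ℝ => 1 - y^2) (-(2*y)) y := by
        simpa using ((hasDerivAt_pow 2 y).const_sub 1)
      have d2 := (hasDerivAt_id y).div d1 h2
      have d3 := d2.sub (arctanh_hasDerivAt' hab)
      refine d3.congr_deriv ?_
      field_simp
      simp only [id]; ring)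
    (fun y hy => by
      have hab := mem_ball_of_Icc' h0 h1 hy
      have hsq : y^2 < 1 := by nlinarith [abs_lt.1 hab]
      have h2 : (0:ℝ) < 1 - y^2 := by linarith
      rw [sub_nonneg, div_le_div_iff₀ h2 (by positivity)]
      nlinarith [hy.1, sq_nonneg y])
  simp only [arctanh_zero'] at this
  simpa using this

lemma arctanh_le_poly' {x : ℝ} (h0 : 0 ≤ x) (h2 : x^2 ≤ 1/2) :
    arctanh x ≤ x + x^3/3 + x^5/5 + x^7/7 + x^9/9 + x^11/11 + 2*x^13/13 := by
  have h1 : x < 1 := by nlinarith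
  have := arctanh_le_helper' h0
    (fun y => y + y^3/3 + y^5/5 + y^7/7 + y^9/9 + y^11/11 + 2*y^13/13 - arctanh y)
    (fun y => 1 + y^2 + y^4 + y^6 + y^8 + y^10 + 2*y^12 - 1/(1-y^2))
    (fun y hy => by
      have hab := mem_ball_of_Icc' h0 h1 hy
      have dpoly : HasDerivAt
          (fun y : ℝ => y + y^3/3 + y^5/5 + y^7/7 + y^9/9 + y^11/11 + 2*y^13/13)
          (1 + y^2 + y^4 + y^6 + y^8 + y^10 + 2*y^12) y := by
        have d1 := hasDerivAt_id y
        have d3 := (hasDerivAt_pow 3 y).div_const 3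
        have d5 := (hasDerivAt_pow 5 y).div_const 5
        have d7 := (hasDerivAt_pow 7 y).div_const 7
        have d9 := (hasDerivAt_pow 9 y).div_const 9
        have d11 := (hasDerivAt_pow 11 y).div_const 11
        have d13 := ((hasDerivAt_pow 13 y).const_mul 2).div_const 13
        have := ((((((d1.add d3).add d5).add d7).add d9).add d11).add d13)
        refine this.congr_deriv ?_
        push_cast
        ring
      exact dpoly.sub (arctanh_hasDerivAt' hab))
    (fun y hy => by
      have hy2 : y^2 ≤ 1/2 := by nlinarith [hy.1, hy.2]
      have hpos : (0:ℝ) < 1 - y^2 := by nlinarith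
      rw [sub_nonneg, div_le_iff₀ hpos]
      have key : 0 ≤ y^12*(1-2*y^2) := mul_nonneg (by positivity) (by linarith)
      nlinarith [key])
  simp only [arctanh_zero'] at this
  nlinarith [this]

end monohelper

section params
variable {c v ω : ℝ}

lemma dom_ne (hv0 : 0 ≤ c*v) (hω : c*v < |ω|) : ω ≠ 0 := by
  intro h; rw [h] at hω; simp at hω; linarith

lemma dom_pos (hv0 : 0 ≤ c*v) (hω : c*v < |ω|) : 0 < ω^2 - (c*v)^2 := by
  have h : (c*v)^2 < |ω|^2 := by nlinarith [abs_nonneg ω]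
  rw [sq_abs] at h; linarith

lemma dom_abs (hv0 : 0 ≤ c*v) (hω : c*v < |ω|) : |c*v/ω| < 1 := by
  rw [abs_div, abs_of_nonneg hv0, div_lt_one (lt_of_le_of_lt hv0 hω)]; exact hω

lemma dom_one_sub (hv0 : 0 ≤ c*v) (hω : c*v < |ω|) : 1 - (c*v/ω)^2 ≠ 0 := by
  have h := dom_abs hv0 hω
  have h2 : (c*v/ω)^2 < 1 := by nlinarith [abs_nonneg (c*v/ω), sq_abs (c*v/ω)]
  linarith

lemma inner_hasDerivAt (hv0 : 0 ≤ c*v) (hω : c*v < |ω|) :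
    HasDerivAt (fun ω : ℝ => arctanh (c*v/ω)) (-(c*v)/(ω^2-(c*v)^2)) ω := by
  have hne := dom_ne hv0 hω
  have d1 : HasDerivAt (fun ω : ℝ => c*v/ω) (c*v * (-(ω^2)⁻¹)) ω := by
    simpa [div_eq_mul_inv] using (hasDerivAt_inv hne).const_mul (c*v)
  have := (arctanh_hasDerivAt' (dom_abs hv0 hω)).comp ω d1
  refine this.congr_deriv ?_
  have h2 := dom_one_sub hv0 hω
  have h3 := (dom_pos hv0 hω).ne'
  field_simp

lemma g_hasDerivAt (hc : 0 < c) (hv0 : 0 ≤ c*v) (hω : c*v < |ω|) :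
    HasDerivAt (fun ω : ℝ => (ω/c) * arctanh (c*v/ω) - v)
      ((1/c) * arctanh (c*v/ω) - v*ω/(ω^2-(c*v)^2)) ω := by
  have hne := dom_ne hv0 hω
  have h3 := (dom_pos hv0 hω).ne'
  have d1 : HasDerivAt (fun ω : ℝ => ω/c) (1/c) ω := by
    simpa using (hasDerivAt_id ω).div_const c
  have := (d1.mul (inner_hasDerivAt hv0 hω)).sub_const v
  refine this.congr_deriv ?_
  field_simp
  ring

lemma g1_hasDerivAt (hc : 0 < c) (hv0 : 0 ≤ c*v) (hω : c*v < |ω|) :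
    HasDerivAt (fun ω : ℝ => (1/c) * arctanh (c*v/ω) - v*ω/(ω^2-(c*v)^2))
      (2*(c*v)^2*v/(ω^2-(c*v)^2)^2) ω := by
  have hne := dom_ne hv0 hω
  have h3 := (dom_pos hv0 hω).ne'
  have d1 := (inner_hasDerivAt hv0 hω).const_mul (1/c)
  have d2 : HasDerivAt (fun ω : ℝ => v*ω) v ω := by simpa using (hasDerivAt_id ω).const_mul v
  have d3 : HasDerivAt (fun ω : ℝ => ω^2-(c*v)^2) (2*ω) ω := by
    simpa using (hasDerivAt_pow 2 ω).sub_const ((c*v)^2)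
  have d4 := d2.div d3 h3
  have := d1.sub d4
  refine this.congr_deriv ?_
  field_simp
  ring

lemma G_hasDerivAt (hc : 0 < c) (hv0 : 0 ≤ c*v) (hω : c*v < |ω|) :
    HasDerivAt (fun ω : ℝ => ((ω^2-(c*v)^2)/(2*c)) * arctanh (c*v/ω) - v*ω/2)
      ((ω/c) * arctanh (c*v/ω) - v) ω := by
  have hne := dom_ne hv0 hω
  have h3 := (dom_pos hv0 hω).ne'
  have h4 : ω ^ 2 - c ^ 2 * v ^ 2 ≠ 0 := by rw [← mul_pow]; exact h3
  have d3 : HasDerivAt (fun ω : ℝ => (ω^2-(c*v)^2)/(2*c)) (2*ω/(2*c)) ω := by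
    simpa using ((hasDerivAt_pow 2 ω).sub_const ((c*v)^2)).div_const (2*c)
  have d2 : HasDerivAt (fun ω : ℝ => v*ω/2) (v/2) ω := by
    simpa using ((hasDerivAt_id ω).const_mul v).div_const 2
  have := (d3.mul (inner_hasDerivAt hv0 hω)).sub d2
  refine this.congr_deriv ?_
  field_simp
  ring

lemma x_facts (hc : 0 < c) (hv0 : 0 ≤ v) (h0 : 0 < ω) (hω : c*v < ω) :
    0 ≤ c*v/ω ∧ c*v/ω < 1 ∧ 0 < ω^2 - (c*v)^2 ∧ (1 - (c*v/ω)^2) = (ω^2-(c*v)^2)/ω^2 := by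
  have ha : 0 ≤ c*v := by positivity
  refine ⟨by positivity, (div_lt_one h0).2 hω, by nlinarith, by field_simp⟩

lemma g_bounds (hc : 0 < c) (hv0 : 0 ≤ v) (h0 : 0 < ω) (hω : c*v < ω) :
    0 ≤ (ω/c) * arctanh (c*v/ω) - v ∧
    (ω/c) * arctanh (c*v/ω) - v ≤ v*(c*v)^2/(ω^2-(c*v)^2) := by
  obtain ⟨hx0, hx1, hpos, hrw⟩ := x_facts hc hv0 h0 hω
  have l1 := le_arctanh' hx0 hx1
  have l2 := arctanh_le' hx0 hx1
  have hωc : 0 < ω/c := by positivity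
  constructor
  · have h2 : (ω/c) * (c*v/ω) ≤ (ω/c) * arctanh (c*v/ω) := mul_le_mul_of_nonneg_left l1 hωc.le
    have heq : (ω/c) * (c*v/ω) = v := by field_simp
    linarith [h2, heq.le, heq.ge]
  · have h2 : (ω/c) * arctanh (c*v/ω) ≤ (ω/c) * ((c*v/ω)/(1-(c*v/ω)^2)) :=
      mul_le_mul_of_nonneg_left l2 hωc.le
    have heq : (ω/c) * ((c*v/ω)/(1-(c*v/ω)^2)) = v + v*(c*v)^2/(ω^2-(c*v)^2) := by
      rw [hrw]
      have : ω ^ 2 - c ^ 2 * v ^ 2 ≠ 0 := by rw [← mul_pow]; exact hpos.ne'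
      field_simp
      ring
    linarith [h2, heq.le, heq.ge]

lemma g1_bounds (hc : 0 < c) (hv0 : 0 ≤ v) (h0 : 0 < ω) (hω : c*v < ω) :
    -(v*(c*v)^2/(ω*(ω^2-(c*v)^2))) ≤ (1/c) * arctanh (c*v/ω) - v*ω/(ω^2-(c*v)^2) ∧
    (1/c) * arctanh (c*v/ω) - v*ω/(ω^2-(c*v)^2) ≤ 0 := by
  obtain ⟨hx0, hx1, hpos, hrw⟩ := x_facts hc hv0 h0 hω
  have l1 := le_arctanh' hx0 hx1
  have l2 := arctanh_le' hx0 hx1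
  have hc' : (0:ℝ) < 1/c := by positivity
  constructor
  · have h2 : (1/c) * (c*v/ω) ≤ (1/c) * arctanh (c*v/ω) := mul_le_mul_of_nonneg_left l1 hc'.le
    have heq : (1/c) * (c*v/ω) - v*ω/(ω^2-(c*v)^2) = -(v*(c*v)^2/(ω*(ω^2-(c*v)^2))) := by
      have : ω ^ 2 - c ^ 2 * v ^ 2 ≠ 0 := by rw [← mul_pow]; exact hpos.ne'
      field_simp
      ring
    linarith [h2, heq.le, heq.ge]
  · have h2 : (1/c) * arctanh (c*v/ω) ≤ (1/c) * ((c*v/ω)/(1-(c*v/ω)^2)) :=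
      mul_le_mul_of_nonneg_left l2 hc'.le
    have heq : (1/c) * ((c*v/ω)/(1-(c*v/ω)^2)) = v*ω/(ω^2-(c*v)^2) := by
      rw [hrw]
      field_simp
    linarith [h2, heq.le, heq.ge]

lemma G_bounds (hc : 0 < c) (hv0 : 0 ≤ v) (h0 : 0 < ω) (hω : c*v < ω) :
    -(v*(c*v)^2/(2*ω)) ≤ ((ω^2-(c*v)^2)/(2*c)) * arctanh (c*v/ω) - v*ω/2 ∧
    ((ω^2-(c*v)^2)/(2*c)) * arctanh (c*v/ω) - v*ω/2 ≤ 0 := by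
  obtain ⟨hx0, hx1, hpos, hrw⟩ := x_facts hc hv0 h0 hω
  have l1 := le_arctanh' hx0 hx1
  have l2 := arctanh_le' hx0 hx1
  have hfac : (0:ℝ) < (ω^2-(c*v)^2)/(2*c) := by positivity
  constructor
  · have h2 : ((ω^2-(c*v)^2)/(2*c)) * (c*v/ω) ≤ ((ω^2-(c*v)^2)/(2*c)) * arctanh (c*v/ω) :=
      mul_le_mul_of_nonneg_left l1 hfac.le
    have heq : ((ω^2-(c*v)^2)/(2*c)) * (c*v/ω) - v*ω/2 = -(v*(c*v)^2/(2*ω)) := by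
      field_simp
      ring
    linarith [h2, heq.le, heq.ge]
  · have h2 : ((ω^2-(c*v)^2)/(2*c)) * arctanh (c*v/ω) ≤
        ((ω^2-(c*v)^2)/(2*c)) * ((c*v/ω)/(1-(c*v/ω)^2)) := mul_le_mul_of_nonneg_left l2 hfac.le
    have heq : ((ω^2-(c*v)^2)/(2*c)) * ((c*v/ω)/(1-(c*v/ω)^2)) = v*ω/2 := by
      rw [hrw]
      have : ω ^ 2 - c ^ 2 * v ^ 2 ≠ 0 := by rw [← mul_pow]; exact hpos.ne'
      field_simp
    linarith [h2, heq.le, heq.ge]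

end params

section tendstos
variable {c v : ℝ}

lemma tendsto_den : Tendsto (fun ω : ℝ => ω^2-(c*v)^2) atTop atTop := by
  apply tendsto_atTop_add_const_right
  exact tendsto_pow_atTop two_ne_zero

lemma tendsto_aux1 : Tendsto (fun ω : ℝ => v*(c*v)^2/(ω^2-(c*v)^2)) atTop (𝓝 0) := by
  have := (tendsto_den (c := c) (v := v)).inv_tendsto_atTop.const_mul (v*(c*v)^2)
  simpa [div_eq_mul_inv] using this

lemma tendsto_aux2 : Tendsto (fun ω : ℝ => -(v*(c*v)^2/(ω*(ω^2-(c*v)^2)))) atTop (𝓝 0) := by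
  have h : Tendsto (fun ω : ℝ => ω*(ω^2-(c*v)^2)) atTop atTop :=
    tendsto_id.atTop_mul_atTop₀ tendsto_den
  have := (h.inv_tendsto_atTop.const_mul (v*(c*v)^2)).neg
  simpa [div_eq_mul_inv] using this

lemma tendsto_aux3 : Tendsto (fun ω : ℝ => -(v*(c*v)^2/(2*ω))) atTop (𝓝 0) := by
  have h : Tendsto (fun ω : ℝ => 2*ω) atTop atTop := tendsto_id.const_mul_atTop two_pos
  have := (h.inv_tendsto_atTop.const_mul (v*(c*v)^2)).neg
  simpa [div_eq_mul_inv] using this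

lemma tendsto_g (hc : 0 < c) (hv0 : 0 ≤ v) :
    Tendsto (fun ω : ℝ => (ω/c) * arctanh (c*v/ω) - v) atTop (𝓝 0) := by
  apply tendsto_of_tendsto_of_tendsto_of_le_of_le' tendsto_const_nhds tendsto_aux1 <;>
    · filter_upwards [eventually_gt_atTop (max (c*v) 0)] with ω hω
      rw [max_lt_iff] at hω
      first
        | exact (g_bounds hc hv0 hω.2 hω.1).1
        | exact (g_bounds hc hv0 hω.2 hω.1).2

lemma tendsto_g1 (hc : 0 < c) (hv0 : 0 ≤ v) :
    Tendsto (fun ω : ℝ => (1/c) * arctanh (c*v/ω) - v*ω/(ω^2-(c*v)^2)) atTop (𝓝 0) := by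
  apply tendsto_of_tendsto_of_tendsto_of_le_of_le' tendsto_aux2 tendsto_const_nhds <;>
    · filter_upwards [eventually_gt_atTop (max (c*v) 0)] with ω hω
      rw [max_lt_iff] at hω
      first
        | exact (g1_bounds hc hv0 hω.2 hω.1).1
        | exact (g1_bounds hc hv0 hω.2 hω.1).2

lemma tendsto_G (hc : 0 < c) (hv0 : 0 ≤ v) :
    Tendsto (fun ω : ℝ => ((ω^2-(c*v)^2)/(2*c)) * arctanh (c*v/ω) - v*ω/2) atTop (𝓝 0) := by
  apply tendsto_of_tendsto_of_tendsto_of_le_of_le' tendsto_aux3 tendsto_const_nhds <;>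
    · filter_upwards [eventually_gt_atTop (max (c*v) 0)] with ω hω
      rw [max_lt_iff] at hω
      first
        | exact (G_bounds hc hv0 hω.2 hω.1).1
        | exact (G_bounds hc hv0 hω.2 hω.1).2

end tendstos

lemma split_even (R : ℝ) (hR : 0 < R) (h : ℝ → ℝ) (he : ∀ x, h (-x) = h x)
    (hint : IntegrableOn h (Ioi R)) :
    ∫ ω in {ω : ℝ | R ≤ |ω|}, h ω = 2 * ∫ ω in Ioi R, h ω := by
  have hset : {ω : ℝ | R ≤ |ω|} = Iic (-R) ∪ Ici R := by
    ext ω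
    simp only [mem_setOf_eq, mem_union, mem_Iic, mem_Ici, le_abs, le_neg]
    tauto
  have hIci : IntegrableOn h (Ici R) := by
    rwa [integrableOn_Ici_iff_integrableOn_Ioi]
  have h_map_neg : (volume.restrict (Ici R)).map Neg.neg = volume.restrict (Iic (-R)) := by
    conv_rhs => rw [← Measure.map_neg_eq_self (volume : Measure ℝ),
      measurableEmbedding_neg.restrict_map]
    simp
  have hIic : IntegrableOn h (Iic (-R)) := by
    rw [IntegrableOn, ← h_map_neg, measurableEmbedding_neg.integrable_map_iff]
    have hcomp : h ∘ Neg.neg = h := funext he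
    rw [hcomp]
    exact hIci
  have hdisj : Disjoint (Iic (-R)) (Ici R) := Iic_disjoint_Ici.2 (not_le.2 (by linarith))
  rw [hset, setIntegral_union hdisj measurableSet_Ici hIic hIci]
  have hval : ∫ ω in Iic (-R), h ω = ∫ ω in Ioi R, h ω :=
    calc ∫ ω in Iic (-R), h ω = ∫ ω in Iic (-R), h (-ω) :=
          setIntegral_congr_fun measurableSet_Iic (fun x _ => (he x).symm)
      _ = ∫ x in Ioi R, h x := by simpa using integral_comp_neg_Iic (-R) h
  rw [hval, integral_Ici_eq_integral_Ioi]
  ring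

lemma ineq1_lem {K L s v : ℝ} (hK : 0 < K) (hL : 0 < L) (hs0 : 0 < s) (hs2 : s^2 = 2)
    (hs15 : s ≤ 1.5) (hv0 : 0 ≤ v) (hv1 : v < 1)
    (hlog : Real.log ((s + v) / (s - v)) = 2 * arctanh (v/s)) (hA1 : v/s ≤ arctanh (v/s)) :
    (K / (2 * L)) * (2 * s * v - (2 - v ^ 2) * Real.log ((s + v) / (s - v))) ≤ K / L := by
  set A : ℝ := arctanh (v/s) with hAdef
  rw [hlog]
  have h2v : (0:ℝ) < 2 - v^2 := by nlinarith
  have hvA : v ≤ s*A := (div_le_iff₀' hs0).1 hA1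
  have e1 : (2-v^2)*v ≤ (2-v^2)*(s*A) := mul_le_mul_of_nonneg_left hvA h2v.le
  have key : 2*s*v - (2-v^2)*(2*A) ≤ 2 := by
    have e2 : s*((2-v^2)*v) ≤ s*((2-v^2)*(s*A)) := mul_le_mul_of_nonneg_left e1 hs0.le
    have e3 : s*((2-v^2)*(s*A)) = 2*((2-v^2)*A) := by
      linear_combination ((2-v^2)*A) * hs2
    have hv3 : v^3 ≤ 1 := by nlinarith [mul_nonneg (mul_nonneg hv0 hv0) hv0]
    have hv3' : (0:ℝ) ≤ v^3 := by positivity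
    have e4 : s*v^3 ≤ 2 := by nlinarith [mul_le_mul hs15 hv3 hv3' (by norm_num : (0:ℝ) ≤ 1.5)]
    have e5 : 2*s*v - s*((2-v^2)*v) = s*v^3 := by ring
    linarith [e2, e3, e4, e5]
  have hpos : (0:ℝ) < K/(2*L) := by positivity
  calc (K / (2 * L)) * (2 * s * v - (2 - v ^ 2) * (2 * A))
      ≤ (K / (2 * L)) * 2 := mul_le_mul_of_nonneg_left key hpos.le
    _ = K / L := by field_simp

lemma ineq2_lem {s v : ℝ} (hs0 : 0 < s) (hs2 : s^2 = 2) (hv0 : 0 ≤ v) (hv1 : v < 1) :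
    2 * s * arctanh (v/s) - 2 * v ≤ 1/2 := by
  set x : ℝ := v/s with hxdef
  set A : ℝ := arctanh x with hAdef
  have hx0 : 0 ≤ x := by positivity
  have hv2 : v^2 ≤ 1 := by nlinarith
  have hx2 : x^2 ≤ 1/2 := by
    rw [hxdef, div_pow, hs2]
    linarith
  have hxs : x ≤ s/2 := by
    nlinarith [hx2, hs2, hx0, hs0]
  have hB := arctanh_le_poly' hx0 hx2
  have p3 : x^3 ≤ s/4 := by
    have h := mul_le_mul hx2 hxs hx0 (by norm_num : (0:ℝ) ≤ 1/2)
    calc x^3 = x^2*x := by ring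
      _ ≤ (1/2)*(s/2) := h
      _ = s/4 := by ring
  have p5 : x^5 ≤ s/8 := by
    have h := mul_le_mul hx2 p3 (by positivity) (by norm_num : (0:ℝ) ≤ 1/2)
    calc x^5 = x^2*x^3 := by ring
      _ ≤ (1/2)*(s/4) := h
      _ = s/8 := by ring
  have p7 : x^7 ≤ s/16 := by
    have h := mul_le_mul hx2 p5 (by positivity) (by norm_num : (0:ℝ) ≤ 1/2)
    calc x^7 = x^2*x^5 := by ring
      _ ≤ (1/2)*(s/8) := h
      _ = s/16 := by ring
  have p9 : x^9 ≤ s/32 := by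
    have h := mul_le_mul hx2 p7 (by positivity) (by norm_num : (0:ℝ) ≤ 1/2)
    calc x^9 = x^2*x^7 := by ring
      _ ≤ (1/2)*(s/16) := h
      _ = s/32 := by ring
  have p11 : x^11 ≤ s/64 := by
    have h := mul_le_mul hx2 p9 (by positivity) (by norm_num : (0:ℝ) ≤ 1/2)
    calc x^11 = x^2*x^9 := by ring
      _ ≤ (1/2)*(s/32) := h
      _ = s/64 := by ring
  have p13 : x^13 ≤ s/128 := by
    have h := mul_le_mul hx2 p11 (by positivity) (by norm_num : (0:ℝ) ≤ 1/2)
    calc x^13 = x^2*x^11 := by ring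
      _ ≤ (1/2)*(s/64) := h
      _ = s/128 := by ring
  have hCs : A - x ≤ s*(1/12+1/40+1/112+1/288+1/704+1/832) := by
    linarith [hB, p3, p5, p7, p9, p11, p13]
  have hmul : 2*s*(A - x) ≤ 2*s*(s*(1/12+1/40+1/112+1/288+1/704+1/832)) :=
    mul_le_mul_of_nonneg_left hCs (by positivity)
  have hsq : 2*s*(s*(1/12+1/40+1/112+1/288+1/704+1/832))
      = 4*(1/12+1/40+1/112+1/288+1/704+1/832) := by
    linear_combination (2*(1/12+1/40+1/112+1/288+1/704+1/832 : ℝ)) * hs2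
  have hvx : s*x = v := by rw [hxdef]; field_simp
  have e : 2*s*A - 2*v = 2*s*(A - x) := by rw [← hvx]; ring
  have hnum : (4:ℝ)*(1/12+1/40+1/112+1/288+1/704+1/832) ≤ 1/2 := by norm_num
  linarith [hmul, hsq, e, hnum]

lemma ineq3_lem {K L s v : ℝ} (hK : 0 < K) (hL : 0 < L) (hs0 : 0 < s) (hs15 : s ≤ 1.5)
    (hv0 : 0 ≤ v) (hv1 : v < 1) (hA0 : 0 ≤ arctanh (v/s)) :
    (2 * L / K) * ((s * v - (2 - v ^ 2) * arctanh (v/s)) / (2 - v ^ 2)) ≤ 4 * L / K := by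
  set A : ℝ := arctanh (v/s) with hAdef
  have hv2 : v^2 ≤ 1 := by nlinarith
  have h2v : (0:ℝ) < 2 - v^2 := by linarith
  have hsv : s*v ≤ 1.5 := by nlinarith [mul_le_mul hs15 hv1.le hv0 (by norm_num : (0:ℝ) ≤ 1.5)]
  have hfrac : (s * v - (2 - v ^ 2) * A) / (2 - v ^ 2) ≤ 2 := by
    rw [div_le_iff₀ h2v]
    have := mul_nonneg h2v.le hA0
    nlinarith [this, hsv, hv2]
  have hpos : (0:ℝ) < 2*L/K := by positivity
  calc (2 * L / K) * ((s * v - (2 - v ^ 2) * A) / (2 - v ^ 2))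
      ≤ (2 * L / K) * 2 := mul_le_mul_of_nonneg_left hfrac hpos.le
    _ = 4 * L / K := by ring

set_option maxHeartbeats 4000000 in
/-- Appendix computation: exact `L¹` norms on `{|ω| ≥ √2·K/L}` of
`g(ω) = (Lω/K)·arctanh(Kv/(Lω)) − v` and of its first two derivatives, together with
the uniform bounds `K/L`, `1/2`, `4L/K`. -/
theorem kernel_integrand_L1_values
    (K L v : ℝ) (hK : 0 < K) (hL : 0 < L) (hv0 : 0 ≤ v) (hv1 : v < 1) :
    (∫ ω in {ω : ℝ | Real.sqrt 2 * K / L ≤ |ω|},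
        |(L * ω / K) * arctanh (K * v / (L * ω)) - v|) =
      (K / (2 * L)) * (2 * Real.sqrt 2 * v -
        (2 - v ^ 2) * Real.log ((Real.sqrt 2 + v) / (Real.sqrt 2 - v))) ∧
    (K / (2 * L)) * (2 * Real.sqrt 2 * v -
        (2 - v ^ 2) * Real.log ((Real.sqrt 2 + v) / (Real.sqrt 2 - v))) ≤ K / L ∧
    (∫ ω in {ω : ℝ | Real.sqrt 2 * K / L ≤ |ω|},
        |deriv (fun ω : ℝ => (L * ω / K) * arctanh (K * v / (L * ω)) - v) ω|) =
      2 * Real.sqrt 2 * arctanh (v / Real.sqrt 2) - 2 * v ∧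
    2 * Real.sqrt 2 * arctanh (v / Real.sqrt 2) - 2 * v ≤ 1 / 2 ∧
    (∫ ω in {ω : ℝ | Real.sqrt 2 * K / L ≤ |ω|},
        |deriv (deriv (fun ω : ℝ => (L * ω / K) * arctanh (K * v / (L * ω)) - v)) ω|) =
      (2 * L / K) * ((Real.sqrt 2 * v - (2 - v ^ 2) * arctanh (v / Real.sqrt 2)) /
        (2 - v ^ 2)) ∧
    (2 * L / K) * ((Real.sqrt 2 * v - (2 - v ^ 2) * arctanh (v / Real.sqrt 2)) /
        (2 - v ^ 2)) ≤ 4 * L / K := by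
  have hs0 : (0:ℝ) < Real.sqrt 2 := Real.sqrt_pos.2 (by norm_num)
  set s : ℝ := Real.sqrt 2 with hsdef
  have hs2 : s^2 = 2 := Real.sq_sqrt (by norm_num)
  have hs1 : 1 < s := by nlinarith
  have hs15 : s ≤ 1.5 := by nlinarith
  set c : ℝ := K / L with hcdef
  have hc : 0 < c := div_pos hK hL
  have hcv0 : 0 ≤ c*v := by positivity
  have h2v : (0:ℝ) < 2 - v^2 := by nlinarith
  set R : ℝ := s * K / L with hRdef
  have hR : R = s * c := by rw [hRdef, hcdef]; ring
  have hRpos : 0 < R := by rw [hR]; positivity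
  have hcvR : c*v < R := by rw [hR]; nlinarith
  -- domain facts
  have hdomIci : ∀ x ∈ Ici R, c*v < |x| := fun x hx => by
    have hx' : R ≤ x := hx
    rw [abs_of_pos (lt_of_lt_of_le hRpos hx')]
    linarith
  have hdomIoi : ∀ x ∈ Ioi R, 0 < x ∧ c*v < x := fun x hx => by
    have hx' : R < x := hx
    exact ⟨lt_trans hRpos hx', by linarith⟩
  have hdomS : ∀ x ∈ {ω : ℝ | R ≤ |ω|}, c*v < |x| := fun x hx => lt_of_lt_of_le hcvR hx
  -- rewriting the lambda
  have harg : ∀ ω : ℝ, K * v / (L * ω) = c*v/ω := by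
    intro ω
    rcases eq_or_ne ω 0 with rfl | hne
    · simp
    · rw [hcdef]; field_simp; try ring
  have hcoef : ∀ ω : ℝ, L * ω / K = ω / c := by
    intro ω
    rw [hcdef]
    field_simp
    try ring
  have Feq : (fun ω : ℝ => (L * ω / K) * arctanh (K * v / (L * ω)) - v)
      = (fun ω : ℝ => (ω/c) * arctanh (c*v/ω) - v) := by
    funext ω; rw [harg ω, hcoef ω]
  -- log identity
  have hsv : s - v ≠ 0 := by nlinarith
  have hlog : Real.log ((s + v) / (s - v)) = 2 * arctanh (v/s) := by
    have hq : (1 + v/s) / (1 - v/s) = (s+v)/(s-v) := by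
      rw [div_eq_div_iff]
      · field_simp
        try ring
      · have : 0 < 1 - v/s := by
          rw [sub_pos, div_lt_one hs0]; linarith
        linarith
      · nlinarith
    unfold arctanh
    rw [hq]
    ring
  -- boundary values
  have hxR : c*v/R = v/s := by rw [hR]; field_simp
  have hR2 : R^2 - (c*v)^2 = c^2*(2-v^2) := by rw [hR]; nlinarith [hs2]
  set A : ℝ := arctanh (v/s) with hAdef
  have hvs1 : v/s < 1 := by rw [div_lt_one hs0]; linarith
  have hvs0 : 0 ≤ v/s := by positivity
  have hA1 : v/s ≤ A := le_arctanh' hvs0 hvs1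
  have hA0 : 0 ≤ A := le_trans hvs0 hA1
  -- FTC computations
  have keyG : ∫ ω in Ioi R, ((ω/c) * arctanh (c*v/ω) - v)
      = 0 - (((R^2-(c*v)^2)/(2*c)) * arctanh (c*v/R) - v*R/2) :=
    integral_Ioi_of_hasDerivAt_of_nonneg'
      (fun x hx => G_hasDerivAt hc hcv0 (hdomIci x hx))
      (fun x hx => (g_bounds hc hv0 (hdomIoi x hx).1 (hdomIoi x hx).2).1)
      (tendsto_G hc hv0)
  have intG : IntegrableOn (fun ω : ℝ => (ω/c) * arctanh (c*v/ω) - v) (Ioi R) :=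
    integrableOn_Ioi_deriv_of_nonneg'
      (fun x hx => G_hasDerivAt hc hcv0 (hdomIci x hx))
      (fun x hx => (g_bounds hc hv0 (hdomIoi x hx).1 (hdomIoi x hx).2).1)
      (tendsto_G hc hv0)
  have keyg1 : ∫ ω in Ioi R, (-((1/c) * arctanh (c*v/ω) - v*ω/(ω^2-(c*v)^2)))
      = 0 - (-((R/c) * arctanh (c*v/R) - v)) :=
    integral_Ioi_of_hasDerivAt_of_nonneg'
      (fun x hx => (g_hasDerivAt hc hcv0 (hdomIci x hx)).neg)
      (fun x hx => by
        have := (g1_bounds hc hv0 (hdomIoi x hx).1 (hdomIoi x hx).2).2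
        linarith)
      (by simpa [Pi.neg_def] using (tendsto_g hc hv0).neg)
  have intg1 : IntegrableOn (fun ω : ℝ => -((1/c) * arctanh (c*v/ω) - v*ω/(ω^2-(c*v)^2)))
      (Ioi R) :=
    integrableOn_Ioi_deriv_of_nonneg'
      (fun x hx => (g_hasDerivAt hc hcv0 (hdomIci x hx)).neg)
      (fun x hx => by
        have := (g1_bounds hc hv0 (hdomIoi x hx).1 (hdomIoi x hx).2).2
        linarith)
      (by simpa [Pi.neg_def] using (tendsto_g hc hv0).neg)
  have g2nonneg : ∀ x : ℝ, 0 ≤ 2*(c*v)^2*v/(x^2-(c*v)^2)^2 := fun x =>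
    div_nonneg (by positivity) (by positivity)
  have keyg2 : ∫ ω in Ioi R, (2*(c*v)^2*v/(ω^2-(c*v)^2)^2)
      = 0 - ((1/c) * arctanh (c*v/R) - v*R/(R^2-(c*v)^2)) :=
    integral_Ioi_of_hasDerivAt_of_nonneg'
      (fun x hx => g1_hasDerivAt hc hcv0 (hdomIci x hx))
      (fun x _ => g2nonneg x)
      (tendsto_g1 hc hv0)
  have intg2 : IntegrableOn (fun ω : ℝ => 2*(c*v)^2*v/(ω^2-(c*v)^2)^2) (Ioi R) :=
    integrableOn_Ioi_deriv_of_nonneg'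
      (fun x hx => g1_hasDerivAt hc hcv0 (hdomIci x hx))
      (fun x _ => g2nonneg x)
      (tendsto_g1 hc hv0)
  -- Value 1
  have val1 : (∫ ω in {ω : ℝ | R ≤ |ω|}, |(L * ω / K) * arctanh (K * v / (L * ω)) - v|)
      = (K / (2 * L)) * (2 * s * v - (2 - v ^ 2) * Real.log ((s + v) / (s - v))) := by
    have step0 : (fun ω : ℝ => |(L * ω / K) * arctanh (K * v / (L * ω)) - v|)
        = fun ω : ℝ => |(ω/c) * arctanh (c*v/ω) - v| := by
      funext ω; rw [harg ω, hcoef ω]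
    rw [show (∫ ω in {ω : ℝ | R ≤ |ω|}, |(L * ω / K) * arctanh (K * v / (L * ω)) - v|)
        = ∫ ω in {ω : ℝ | R ≤ |ω|}, |(ω/c) * arctanh (c*v/ω) - v| from by rw [step0]]
    have heven : ∀ x : ℝ, |(-x/c) * arctanh (c*v/(-x)) - v| = |(x/c) * arctanh (c*v/x) - v| := by
      intro x
      rw [div_neg, arctanh_neg']
      congr 1
      ring
    rw [split_even R hRpos _ heven intG.abs]
    have habs : ∫ ω in Ioi R, |(ω/c) * arctanh (c*v/ω) - v|
        = ∫ ω in Ioi R, ((ω/c) * arctanh (c*v/ω) - v) :=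
      setIntegral_congr_fun measurableSet_Ioi (fun x hx =>
        abs_of_nonneg (g_bounds hc hv0 (hdomIoi x hx).1 (hdomIoi x hx).2).1)
    rw [habs, keyG, hlog, hxR, hR2, hR]
    rw [show K / (2*L) = c/2 from by rw [hcdef, div_div, mul_comm 2 L]]
    field_simp
    ring
  -- Value 2
  have val2 : (∫ ω in {ω : ℝ | R ≤ |ω|},
        |deriv (fun ω : ℝ => (L * ω / K) * arctanh (K * v / (L * ω)) - v) ω|)
      = 2 * s * A - 2 * v := by
    rw [Feq]
    have hder : ∀ x ∈ {ω : ℝ | R ≤ |ω|},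
        |deriv (fun ω : ℝ => (ω/c) * arctanh (c*v/ω) - v) x|
        = |(1/c) * arctanh (c*v/x) - v*x/(x^2-(c*v)^2)| := fun x hx => by
      rw [(g_hasDerivAt hc hcv0 (hdomS x hx)).deriv]
    rw [setIntegral_congr_fun (isClosed_le continuous_const continuous_abs).measurableSet hder]
    have heven : ∀ x : ℝ, |(1/c) * arctanh (c*v/(-x)) - v*(-x)/((-x)^2-(c*v)^2)|
        = |(1/c) * arctanh (c*v/x) - v*x/(x^2-(c*v)^2)| := by
      intro x
      rw [div_neg, arctanh_neg']
      rw [show (1/c) * (-arctanh (c*v/x)) - v*(-x)/((-x)^2-(c*v)^2)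
          = -((1/c) * arctanh (c*v/x) - v*x/(x^2-(c*v)^2)) from by ring_nf]
      exact abs_neg _
    have intg1' : IntegrableOn
        (fun ω : ℝ => (1/c) * arctanh (c*v/ω) - v*ω/(ω^2-(c*v)^2)) (Ioi R) :=
      (intg1.neg).congr (Filter.Eventually.of_forall fun x => neg_neg _)
    rw [split_even R hRpos _ heven intg1'.abs]
    have habs : ∫ ω in Ioi R, |(1/c) * arctanh (c*v/ω) - v*ω/(ω^2-(c*v)^2)|
        = ∫ ω in Ioi R, (-((1/c) * arctanh (c*v/ω) - v*ω/(ω^2-(c*v)^2))) :=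
      setIntegral_congr_fun measurableSet_Ioi (fun x hx =>
        abs_of_nonpos (g1_bounds hc hv0 (hdomIoi x hx).1 (hdomIoi x hx).2).2)
    rw [habs, keyg1, hxR, hR]
    have heqRc : s*c/c = s := by field_simp
    rw [heqRc]
    ring
  -- Value 3
  have val3 : (∫ ω in {ω : ℝ | R ≤ |ω|},
        |deriv (deriv (fun ω : ℝ => (L * ω / K) * arctanh (K * v / (L * ω)) - v)) ω|)
      = (2 * L / K) * ((s * v - (2 - v ^ 2) * A) / (2 - v ^ 2)) := by
    rw [Feq]
    have hU : IsOpen {y : ℝ | c*v < |y|} := isOpen_lt continuous_const continuous_abs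
    have hder : ∀ x ∈ {ω : ℝ | R ≤ |ω|},
        |deriv (deriv (fun ω : ℝ => (ω/c) * arctanh (c*v/ω) - v)) x|
        = |2*(c*v)^2*v/(x^2-(c*v)^2)^2| := fun x hx => by
      have hx' : c*v < |x| := hdomS x hx
      have hevq : deriv (fun ω : ℝ => (ω/c) * arctanh (c*v/ω) - v)
          =ᶠ[𝓝 x] (fun ω : ℝ => (1/c) * arctanh (c*v/ω) - v*ω/(ω^2-(c*v)^2)) := by
        filter_upwards [hU.mem_nhds hx'] with y hy
        exact (g_hasDerivAt hc hcv0 hy).deriv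
      rw [hevq.deriv_eq, (g1_hasDerivAt hc hcv0 hx').deriv]
    rw [setIntegral_congr_fun (isClosed_le continuous_const continuous_abs).measurableSet hder]
    have heven : ∀ x : ℝ, |2*(c*v)^2*v/((-x)^2-(c*v)^2)^2| = |2*(c*v)^2*v/(x^2-(c*v)^2)^2| := by
      intro x
      rw [neg_pow, neg_one_pow_eq_one_iff_even (by norm_num : (-1:ℝ) ≠ 1) |>.2 (by norm_num)]
      ring_nf
    rw [split_even R hRpos _ heven intg2.abs]
    have habs : ∫ ω in Ioi R, |2*(c*v)^2*v/(ω^2-(c*v)^2)^2|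
        = ∫ ω in Ioi R, (2*(c*v)^2*v/(ω^2-(c*v)^2)^2) :=
      setIntegral_congr_fun measurableSet_Ioi (fun x _ => abs_of_nonneg (g2nonneg x))
    rw [habs, keyg2, hxR, hR2, hR]
    rw [show 2*L/K = 2/c from by rw [hcdef, div_div_eq_mul_div]]
    field_simp
    ring
  have ineq1 := ineq1_lem hK hL hs0 hs2 hs15 hv0 hv1 hlog hA1
  have ineq2 := ineq2_lem hs0 hs2 hv0 hv1
  have ineq3 := ineq3_lem hK hL (K := K) (L := L) hs0 hs15 hv0 hv1 hA0
  exact ⟨val1, ineq1, val2, ineq2, val3, ineq3⟩
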